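/- Two-sided forgetting bound (conditional expectations given both endpoints): let S be a finite state space and fix strictly positive path weights w built from a transition matrix q with q(x,x') ≥ ε > 0 and positive observation weights. For any bounded function f on S × S with 0 < f ≤ ‖f‖_∞, any probability measures μ₁, μ₂ on S × S, and any 1 ≤ t ≤ n, |∑_{x,x'} E[f(X_{t-1},X_t) | Y_{0:n}, X_0 = x, X_n = x']·μ₁(x,x') − ∑_{x,x'} E[f(X_{t-1},X_t) | Y_{0:n}, X_0 = x, X_n = x']·μ₂(x,x')| ≤ (‖f‖_∞/ε)·(ρ^{t-1} + ρ^{n-t}), where ρ = 1 − ε. -/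

import Mathlib

open Finset

/-- Weight of a state path `x_{0:n}` given the observations `y_{1:n}`,
without initial-law and time-0 observation factors. -/
noncomputable def hmmPathWeight {S Y : Type*} [Fintype S] (q : S → S → ℝ)
    (g : S → Y → ℝ) (y : ℕ → Y) (n : ℕ) (x : Fin (n + 1) → S) : ℝ :=
  ∏ u : Fin n, (q (x u.castSucc) (x u.succ) * g (x u.succ) (y ((u : ℕ) + 1)))

/-- Conditional expectation of `f(X_{t-1}, X_t)` given the observations and both
endpoints `X_0 = a`, `X_n = b`, as a ratio of sums of path weights. -/
noncomputable def hmmCondExp {S Y : Type*} [Fintype S] [DecidableEq S] (q : S → S → ℝ)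
    (g : S → Y → ℝ) (y : ℕ → Y) (f : S → S → ℝ) (n t : ℕ)
    (h1 : 1 ≤ t) (h2 : t ≤ n) (a b : S) : ℝ :=
  (∑ p : Fin (n + 1) → S,
      if p 0 = a ∧ p (Fin.last n) = b then
        hmmPathWeight q g y n p * f (p ⟨t - 1, by omega⟩) (p ⟨t, by omega⟩)
      else 0) /
    (∑ p : Fin (n + 1) → S,
      if p 0 = a ∧ p (Fin.last n) = b then hmmPathWeight q g y n p else 0)

namespace Stmt14

set_option linter.unusedSectionVars false

section PathSum
variable {S : Type*} [Fintype S] [DecidableEq S]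

noncomputable def pathSum : List (S → S → ℝ) → S → S → ℝ
  | [], a, b => if b = a then 1 else 0
  | e :: E, a, b => ∑ v, e a v * pathSum E v b

lemma pathSum_cons (e : S → S → ℝ) (E : List (S → S → ℝ)) (a b : S) :
    pathSum (e :: E) a b = ∑ v, e a v * pathSum E v b := rfl

@[simp] lemma pathSum_nil (a b : S) :
    pathSum ([] : List (S → S → ℝ)) a b = if b = a then 1 else 0 := rfl

lemma pathSum_nonneg {E : List (S → S → ℝ)} (h : ∀ e ∈ E, ∀ u v, 0 ≤ e u v) (a b : S) :
    0 ≤ pathSum E a b := by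
  induction E generalizing a with
  | nil => simp only [pathSum]; positivity
  | cons e E ih =>
    rw [pathSum_cons]
    refine Finset.sum_nonneg fun v _ => mul_nonneg (h e (by simp) a v)
      (ih (fun e' he' => h e' (by simp [he'])) v)

lemma pathSum_diag_pos {E : List (S → S → ℝ)} (h : ∀ e ∈ E, ∀ u v, 0 < e u v) (b : S) :
    0 < pathSum E b b := by
  induction E generalizing b with
  | nil => simp [pathSum]
  | cons e E ih =>
    rw [pathSum_cons]
    have h1 : 0 < e b b * pathSum E b b :=
      mul_pos (h e (by simp) b b) (ih (fun e' he' => h e' (by simp [he'])) b)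
    refine lt_of_lt_of_le h1
      (Finset.single_le_sum (f := fun v => e b v * pathSum E v b) ?_ (mem_univ b))
    exact fun v _ => mul_nonneg (h e (by simp) b v).le
      (pathSum_nonneg (fun e' he' u w => (h e' (by simp [he']) u w).le) v b)

lemma pathSum_single (e : S → S → ℝ) (a b : S) : pathSum [e] a b = e a b := by
  rw [pathSum_cons]
  simp [pathSum, mul_ite]

lemma pathSum_split (E₁ E₂ : List (S → S → ℝ)) (a b : S) :
    pathSum (E₁ ++ E₂) a b = ∑ w, pathSum E₁ a w * pathSum E₂ w b := by
  induction E₁ generalizing a with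
  | nil => simp [ite_mul]
  | cons e E ih =>
    simp only [List.cons_append, pathSum_cons, ih]
    simp only [Finset.mul_sum, Finset.sum_mul]
    rw [Finset.sum_comm]
    congr 1; ext w
    congr 1; ext v
    ring

lemma pathSum_append_single (E : List (S → S → ℝ)) (e : S → S → ℝ) (a b : S) :
    pathSum (E ++ [e]) a b = ∑ w, pathSum E a w * e w b := by
  rw [pathSum_split]
  simp [pathSum_single]

noncomputable def pTot (E : List (S → S → ℝ)) (a : S) : ℝ := ∑ u, pathSum E a u

/-- an edge of the form `q·c` -/
def IsQC (q : S → S → ℝ) (e : S → S → ℝ) : Prop :=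
  ∃ c : S → ℝ, (∀ v, 0 < c v) ∧ ∀ u v, e u v = q u v * c v

/-- edge built from transition matrix and multiplier -/
def mkE (q : S → S → ℝ) (c : S → ℝ) : S → S → ℝ := fun u v => q u v * c v

def transp (q : S → S → ℝ) : S → S → ℝ := fun u v => q v u

lemma pathSum_rev (q : S → S → ℝ) :
    ∀ (M : List (S → ℝ)) (cl c₀ : S → ℝ) (v b : S),
    c₀ v * pathSum ((M ++ [cl]).map (mkE q)) v b
      = cl b * pathSum ((M.reverse ++ [c₀]).map (mkE (transp q))) b v := by
  intro M
  induction M with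
  | nil =>
    intro cl c₀ v b
    simp only [List.nil_append, List.reverse_nil, List.map_cons, List.map_nil]
    rw [pathSum_single, pathSum_single]
    simp only [mkE, transp]
    ring
  | cons c M ih =>
    intro cl c₀ v b
    simp only [List.cons_append, List.map_cons, pathSum_cons]
    rw [Finset.mul_sum]
    have step : ∀ w, c₀ v * (mkE q c v w * pathSum ((M ++ [cl]).map (mkE q)) w b)
        = cl b * (pathSum ((M.reverse ++ [c]).map (mkE (transp q))) b w * mkE (transp q) c₀ w v) := by
      intro w
      have h := ih cl c w b
      calc c₀ v * (mkE q c v w * pathSum ((M ++ [cl]).map (mkE q)) w b)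
          = (q v w * c₀ v) * (c w * pathSum ((M ++ [cl]).map (mkE q)) w b) := by
            simp only [mkE]; ring
        _ = (q v w * c₀ v) * (cl b * pathSum ((M.reverse ++ [c]).map (mkE (transp q))) b w) := by
            rw [h]
        _ = cl b * (pathSum ((M.reverse ++ [c]).map (mkE (transp q))) b w * mkE (transp q) c₀ w v) := by
            simp only [mkE, transp]; ring
    rw [Finset.sum_congr rfl (fun w _ => step w), ← Finset.mul_sum]
    congr 1
    rw [← pathSum_append_single, List.reverse_cons]
    congr 1
    simp
end PathSum

section Contract
variable {S : Type*} [Fintype S] [DecidableEq S] [Nonempty S]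
variable {q : S → S → ℝ} {ε : ℝ} (hε : 0 < ε) (hq : ∀ u v, ε ≤ q u v) (hq1 : ∀ u v, q u v ≤ 1)

include hε hq in
lemma qc_pos {E : List (S → S → ℝ)} (h : ∀ e ∈ E, IsQC q e) :
    ∀ e ∈ E, ∀ u v, 0 < e u v := by
  intro e he u v
  obtain ⟨c, hc, hce⟩ := h e he
  rw [hce]
  exact mul_pos (lt_of_lt_of_le hε (hq u v)) (hc v)

include hε hq in
lemma pTot_pos {E : List (S → S → ℝ)} (h : ∀ e ∈ E, IsQC q e) (a : S) :
    0 < pTot E a := by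
  have h0 := qc_pos hε hq h
  refine lt_of_lt_of_le (pathSum_diag_pos h0 a) ?_
  exact Finset.single_le_sum (fun v _ => pathSum_nonneg (fun e he u w => (h0 e he u w).le) a v)
    (mem_univ a)

/-- one-step L¹ contraction for zero-sum signed vectors under minorization -/
lemma contract_step {Δ : S → ℝ} (hΔ : ∑ a, Δ a = 0)
    {R : S → S → ℝ} {ν : S → ℝ} (hν0 : ∀ v, 0 ≤ ν v) (hν1 : ∑ v, ν v = 1)
    (hmin : ∀ a v, ε * ν v ≤ R a v) (hrow : ∀ a, ∑ v, R a v = 1) :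
    ∑ v, |∑ a, Δ a * R a v| ≤ (1 - ε) * ∑ a, |Δ a| := by
  have key : ∀ v, ∑ a, Δ a * R a v = ∑ a, Δ a * (R a v - ε * ν v) := by
    intro v
    simp only [mul_sub]
    rw [Finset.sum_sub_distrib]
    have : ∑ a, Δ a * (ε * ν v) = (∑ a, Δ a) * (ε * ν v) := by rw [Finset.sum_mul]
    rw [this, hΔ]; ring
  calc ∑ v, |∑ a, Δ a * R a v| ≤ ∑ v, ∑ a, |Δ a| * (R a v - ε * ν v) := by
        refine Finset.sum_le_sum fun v _ => ?_
        rw [key v]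
        refine (Finset.abs_sum_le_sum_abs _ _).trans (Finset.sum_le_sum fun a _ => ?_)
        rw [abs_mul, abs_of_nonneg (sub_nonneg.mpr (hmin a v))]
    _ = ∑ a, |Δ a| * (1 - ε) := by
        rw [Finset.sum_comm]
        refine Finset.sum_congr rfl fun a _ => ?_
        rw [← Finset.mul_sum]
        congr 1
        rw [Finset.sum_sub_distrib, hrow, ← Finset.mul_sum, hν1, mul_one]
    _ = (1 - ε) * ∑ a, |Δ a| := by rw [← Finset.sum_mul, mul_comm]

include hε hq hq1 in
/-- L¹ forgetting for normalized rows of QC path sums -/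
lemma lemmaF : ∀ (E : List (S → S → ℝ)), (∀ e ∈ E, IsQC q e) →
    ∀ (Δ : S → ℝ), ∑ a, Δ a = 0 →
    ∑ u, |∑ a, Δ a * (pathSum E a u / pTot E a)| ≤ (1 - ε) ^ E.length * ∑ a, |Δ a| := by
  intro E
  induction E with
  | nil =>
    intro _ Δ hΔ
    simp only [pathSum, pTot, List.length_nil, pow_zero, one_mul]
    have : ∀ u : S, (∑ a, Δ a * ((if u = a then (1:ℝ) else 0) / ∑ u', if u' = a then (1:ℝ) else 0)) = Δ u := by
      intro u
      have hs : ∀ a : S, (∑ u' : S, if u' = a then (1:ℝ) else 0) = 1 := by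
        intro a; simp
      simp only [hs, div_one]
      rw [Finset.sum_eq_single u]
      · simp
      · intro a _ ha; simp [Ne.symm ha]
      · simp
    refine le_of_eq ?_
    congr 1; ext u; rw [this u]
  | cons e E ih =>
    intro hQC Δ hΔ
    obtain ⟨c, hc, hce⟩ := hQC e (by simp)
    have hQC' : ∀ e' ∈ E, IsQC q e' := fun e' he' => hQC e' (by simp [he'])
    have htot : ∀ a, 0 < pTot E a := pTot_pos hε hq hQC'
    have htot' : ∀ a, 0 < pTot (e :: E) a := pTot_pos hε hq hQC
    set R : S → S → ℝ := fun a v => e a v * pTot E v / pTot (e :: E) a with hR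
    have hrep : ∀ a u, pathSum (e :: E) a u / pTot (e :: E) a
        = ∑ v, R a v * (pathSum E v u / pTot E v) := by
      intro a u
      rw [pathSum_cons, Finset.sum_div]
      refine Finset.sum_congr rfl fun v _ => ?_
      rw [hR]
      have h2 : pTot E v ≠ 0 := (htot v).ne'
      have h3 : pTot (e :: E) a ≠ 0 := (htot' a).ne'
      field_simp
    have hrow : ∀ a, ∑ v, R a v = 1 := by
      intro a
      rw [hR]
      simp only
      rw [← Finset.sum_div]
      rw [div_eq_one_iff_eq (htot' a).ne']
      have : pTot (e :: E) a = ∑ u, ∑ v, e a v * pathSum E v u := rfl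
      rw [this, Finset.sum_comm]
      refine Finset.sum_congr rfl fun v _ => ?_
      rw [pTot, Finset.mul_sum]
    set N : ℝ := ∑ w, c w * pTot E w with hN
    have hNpos : 0 < N :=
      Finset.sum_pos (fun w _ => mul_pos (hc w) (htot w)) univ_nonempty
    set ν : S → ℝ := fun v => c v * pTot E v / N with hν
    have hν0 : ∀ v, 0 ≤ ν v := fun v => div_nonneg (mul_pos (hc v) (htot v)).le hNpos.le
    have hν1 : ∑ v, ν v = 1 := by
      rw [hν, ← Finset.sum_div, ← hN, div_self hNpos.ne']
    have hmin : ∀ a v, ε * ν v ≤ R a v := by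
      intro a v
      rw [hR, hν]
      simp only
      have h1 : pTot (e :: E) a ≤ N := by
        have : pTot (e :: E) a = ∑ v, e a v * pTot E v := by
          rw [pTot]
          have : ∀ v, pathSum (e :: E) a v = ∑ w, e a w * pathSum E w v := fun v => rfl
          simp only [this]
          rw [Finset.sum_comm]
          refine Finset.sum_congr rfl fun v _ => ?_
          rw [pTot, Finset.mul_sum]
        rw [this, hN]
        refine Finset.sum_le_sum fun v _ => ?_
        rw [hce]
        refine mul_le_mul_of_nonneg_right ?_ (htot v).le
        calc q a v * c v ≤ 1 * c v := mul_le_mul_of_nonneg_right (hq1 a v) (hc v).le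
          _ = c v := one_mul _
      rw [← mul_div_assoc, div_le_div_iff₀ hNpos (htot' a)]
      calc ε * (c v * pTot E v) * pTot (e :: E) a ≤ ε * (c v * pTot E v) * N := by
            refine mul_le_mul_of_nonneg_left h1 ?_
            have := (hc v).le
            have := (htot v).le
            positivity
        _ ≤ e a v * pTot E v * N := by
            refine mul_le_mul_of_nonneg_right ?_ hNpos.le
            rw [hce]
            have h4 : ε * c v ≤ q a v * c v :=
              mul_le_mul_of_nonneg_right (hq a v) (hc v).le
            nlinarith [(htot v).le]
    set Δ' : S → ℝ := fun v => ∑ a, Δ a * R a v with hΔ'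
    have hΔ'0 : ∑ v, Δ' v = 0 := by
      rw [hΔ', Finset.sum_comm]
      calc ∑ a, ∑ v, Δ a * R a v = ∑ a, Δ a * ∑ v, R a v := by
            simp only [Finset.mul_sum]
        _ = 0 := by simp only [hrow, mul_one, hΔ]
    calc ∑ u, |∑ a, Δ a * (pathSum (e :: E) a u / pTot (e :: E) a)|
        = ∑ u, |∑ v, Δ' v * (pathSum E v u / pTot E v)| := by
          refine Finset.sum_congr rfl fun u _ => ?_
          congr 1
          simp only [hrep, Finset.mul_sum, hΔ']
          rw [Finset.sum_comm]
          refine Finset.sum_congr rfl fun v _ => ?_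
          rw [Finset.sum_mul]
          refine Finset.sum_congr rfl fun a _ => ?_
          ring
      _ ≤ (1 - ε) ^ E.length * ∑ v, |Δ' v| := ih hQC' Δ' hΔ'0
      _ ≤ (1 - ε) ^ E.length * ((1 - ε) * ∑ a, |Δ a|) := by
          refine mul_le_mul_of_nonneg_left ?_ ?_
          · exact contract_step hΔ hν0 hν1 hmin hrow
          · have hε1 : ε ≤ 1 :=
              le_trans (hq (Classical.arbitrary S) (Classical.arbitrary S))
                (hq1 (Classical.arbitrary S) (Classical.arbitrary S))
            have h0 : (0:ℝ) ≤ 1 - ε := by linarith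
            positivity
      _ = (1 - ε) ^ (e :: E).length * ∑ a, |Δ a| := by
          rw [List.length_cons, pow_succ]
          ring

include hε hq hq1 in
lemma forget_rows {E : List (S → S → ℝ)} (hQC : ∀ e ∈ E, IsQC q e) (a a' : S) :
    ∑ u, |pathSum E a u / pTot E a - pathSum E a' u / pTot E a'|
      ≤ 2 * (1 - ε) ^ E.length := by
  set Δ : S → ℝ := fun s => (if s = a then (1:ℝ) else 0) - (if s = a' then 1 else 0) with hΔd
  have hΔ0 : ∑ s, Δ s = 0 := by
    rw [hΔd]
    rw [Finset.sum_sub_distrib]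
    rw [Finset.sum_ite_eq' univ a (fun _ => (1:ℝ)), Finset.sum_ite_eq' univ a' (fun _ => (1:ℝ))]
    simp
  have h := lemmaF hε hq hq1 E hQC Δ hΔ0
  have hinner : ∀ u, (∑ s, Δ s * (pathSum E s u / pTot E s))
      = pathSum E a u / pTot E a - pathSum E a' u / pTot E a' := by
    intro u
    rw [hΔd]
    simp only [sub_mul, ite_mul, one_mul, zero_mul]
    rw [Finset.sum_sub_distrib]
    rw [Finset.sum_ite_eq' univ a (fun s => pathSum E s u / pTot E s),
      Finset.sum_ite_eq' univ a' (fun s => pathSum E s u / pTot E s)]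
    simp
  have hΔsum : ∑ s, |Δ s| ≤ 2 := by
    calc ∑ s, |Δ s| ≤ ∑ s, (|if s = a then (1:ℝ) else 0| + |if s = a' then 1 else 0|) := by
          refine Finset.sum_le_sum fun s _ => ?_
          rw [hΔd]
          exact abs_sub _ _
      _ = 2 := by
          rw [Finset.sum_add_distrib]
          have hi : ∀ x : S, ∑ s, |if s = x then (1:ℝ) else 0| = 1 := by
            intro x
            have : ∀ s : S, |if s = x then (1:ℝ) else 0| = if s = x then 1 else 0 := by
              intro s; by_cases hsx : s = x <;> simp [hsx]
            simp only [this]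
            rw [Finset.sum_ite_eq' univ x (fun _ => (1:ℝ))]
            simp
          rw [hi a, hi a']
          norm_num
  have h' : ∑ u, |pathSum E a u / pTot E a - pathSum E a' u / pTot E a'|
      = ∑ u, |∑ s, Δ s * (pathSum E s u / pTot E s)| :=
    Finset.sum_congr rfl fun u _ => by rw [hinner u]
  rw [h']
  refine h.trans ?_
  rw [mul_comm]
  refine mul_le_mul_of_nonneg_right hΔsum ?_
  have hε1 : ε ≤ 1 :=
    le_trans (hq (Classical.arbitrary S) (Classical.arbitrary S))
      (hq1 (Classical.arbitrary S) (Classical.arbitrary S))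
  have h0 : (0:ℝ) ≤ 1 - ε := by linarith
  positivity
end Contract

section Conv
variable {S : Type*} [Fintype S] [DecidableEq S]

lemma sum_pi_succ (n : ℕ) (F : (Fin (n + 2) → S) → ℝ) :
    ∑ p : Fin (n + 2) → S, F p = ∑ s : S, ∑ p' : Fin (n + 1) → S, F (Fin.cons s p') := by
  rw [← Equiv.sum_comp (Fin.consEquiv (fun _ : Fin (n + 2) => S)) F, Fintype.sum_prod_type]
  rfl

lemma conv (n : ℕ) (E : ℕ → S → S → ℝ) (a b : S) :
    (∑ p : Fin (n + 1) → S,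
      if p 0 = a ∧ p (Fin.last n) = b then
        ∏ u : Fin n, E ((u : ℕ) + 1) (p u.castSucc) (p u.succ)
      else 0)
      = pathSum ((List.range n).map (fun i => E (i + 1))) a b := by
  induction n generalizing E a with
  | zero =>
    simp only [List.range_zero, List.map_nil, pathSum]
    rw [Fintype.sum_equiv (Equiv.funUnique (Fin 1) S) _
      (fun s => if s = a ∧ s = b then 1 else 0) ?_]
    · simp only [ite_and]
      rw [Finset.sum_ite_eq' univ a (fun s => if s = b then (1:ℝ) else 0)]
      simp only [mem_univ, if_true]
      exact if_congr eq_comm rfl rfl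
    · intro p
      simp [Fin.last]
  | succ n ih =>
    rw [sum_pi_succ]
    have hterm : ∀ (s : S) (p' : Fin (n + 1) → S),
        (if (Fin.cons s p' : Fin (n + 2) → S) 0 = a ∧ (Fin.cons s p' : Fin (n + 2) → S) (Fin.last (n + 1)) = b then
          ∏ u : Fin (n + 1), E ((u : ℕ) + 1) ((Fin.cons s p' : Fin (n + 2) → S) u.castSucc) ((Fin.cons s p' : Fin (n + 2) → S) u.succ)
        else 0)
        = (if s = a ∧ p' (Fin.last n) = b then
            E 1 s (p' 0) * ∏ u : Fin n, E ((u : ℕ) + 1 + 1) (p' u.castSucc) (p' u.succ)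
          else 0) := by
      intro s p'
      have h0 : (Fin.cons s p' : Fin (n + 2) → S) 0 = s := rfl
      have hl : (Fin.cons s p' : Fin (n + 2) → S) (Fin.last (n + 1)) = p' (Fin.last n) := by
        rw [← Fin.succ_last, Fin.cons_succ]
      have hprod : ∏ u : Fin (n + 1), E ((u : ℕ) + 1) ((Fin.cons s p' : Fin (n + 2) → S) u.castSucc) ((Fin.cons s p' : Fin (n + 2) → S) u.succ)
          = E 1 s (p' 0) * ∏ u : Fin n, E ((u : ℕ) + 1 + 1) (p' u.castSucc) (p' u.succ) := by
        rw [Fin.prod_univ_succ]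
        simp only [Fin.val_zero, Fin.val_succ, Fin.castSucc_zero, Fin.cons_zero,
          ← Fin.succ_castSucc, Fin.cons_succ, zero_add]
      rw [h0, hl, hprod]
    simp only [hterm]
    have houter : ∀ s : S, (∑ p' : Fin (n + 1) → S,
        if s = a ∧ p' (Fin.last n) = b then
          E 1 s (p' 0) * ∏ u : Fin n, E ((u : ℕ) + 1 + 1) (p' u.castSucc) (p' u.succ)
        else 0)
        = if s = a then (∑ p' : Fin (n + 1) → S,
            if p' (Fin.last n) = b then
              E 1 s (p' 0) * ∏ u : Fin n, E ((u : ℕ) + 1 + 1) (p' u.castSucc) (p' u.succ)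
            else 0) else 0 := by
      intro s
      by_cases hs : s = a <;> simp [hs]
    rw [Finset.sum_congr rfl fun s _ => houter s, Finset.sum_ite_eq' univ a]
    simp only [mem_univ, if_true]
    have hinner : ∀ p' : Fin (n + 1) → S,
        (if p' (Fin.last n) = b then
          E 1 a (p' 0) * ∏ u : Fin n, E ((u : ℕ) + 1 + 1) (p' u.castSucc) (p' u.succ)
        else 0)
        = ∑ v, (if p' 0 = v ∧ p' (Fin.last n) = b then
            E 1 a v * ∏ u : Fin n, E ((u : ℕ) + 1 + 1) (p' u.castSucc) (p' u.succ)
          else 0) := by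
      intro p'
      simp only [ite_and]
      rw [Finset.sum_ite_eq univ (p' 0)]
      simp
    rw [Finset.sum_congr rfl fun p' _ => hinner p', Finset.sum_comm]
    have hv : ∀ v, (∑ p' : Fin (n + 1) → S,
        if p' 0 = v ∧ p' (Fin.last n) = b then
          E 1 a v * ∏ u : Fin n, E ((u : ℕ) + 1 + 1) (p' u.castSucc) (p' u.succ)
        else 0)
        = E 1 a v * pathSum ((List.range n).map (fun i => E (i + 1 + 1))) v b := by
      intro v
      rw [← ih (fun r => E (r + 1)) v]
      rw [Finset.mul_sum]
      refine Finset.sum_congr rfl fun p' _ => ?_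
      rw [mul_ite, mul_zero]
    rw [Finset.sum_congr rfl fun v _ => hv v]
    have hlist : (List.range (n + 1)).map (fun i => E (i + 1))
        = (fun u v => E 1 u v) :: (List.range n).map (fun i => E (i + 1 + 1)) := by
      rw [List.range_succ_eq_map]
      simp [List.map_map, Function.comp]
    rw [hlist, pathSum_cons]

lemma range_split {α : Type*} (φ : ℕ → α) (m k : ℕ) :
    (List.range (m + 1 + k)).map φ
      = (List.range m).map φ ++ [φ m] ++ (List.range k).map (fun i => φ (m + 1 + i)) := by
  have h : m + 1 + k = m + (1 + k) := by omega
  have hr1 : List.range 1 = [0] := rfl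
  rw [h, List.range_add, List.map_append, List.map_map, List.range_add, hr1]
  simp only [List.map_append, List.map_map, List.map_cons, List.map_nil, Function.comp,
    add_zero, List.append_assoc, List.singleton_append]
  congr 1
  refine congrArg _ (List.map_congr_left fun i _ => ?_)
  simp only [Function.comp]
  congr 1
  omega
end Conv

section Jstab
variable {S : Type*} [Fintype S] [DecidableEq S] [Nonempty S]

lemma Jstab (q : S → S → ℝ) (ε C : ℝ) (hε : 0 < ε)
    (hq : ∀ u v, ε ≤ q u v) (f : S → S → ℝ)
    (hf : ∀ u v, 0 < f u v) (hfC : ∀ u v, f u v ≤ C)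
    (β : S → ℝ) (hβ0 : ∀ v, 0 ≤ β v) (hβ1 : ∑ v, β v = 1)
    (α₁ α₂ : S → ℝ) (hα₁0 : ∀ u, 0 ≤ α₁ u) (hα₁1 : ∑ u, α₁ u = 1)
    (hα₂0 : ∀ u, 0 ≤ α₂ u) (hα₂1 : ∑ u, α₂ u = 1)
    (hq1 : ∀ u v, q u v ≤ 1) :
    |(∑ u, ∑ v, α₁ u * q u v * β v * f u v) / (∑ u, ∑ v, α₁ u * q u v * β v)
      - (∑ u, ∑ v, α₂ u * q u v * β v * f u v) / (∑ u, ∑ v, α₂ u * q u v * β v)|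
      ≤ C / (2 * ε) * ∑ u, |α₁ u - α₂ u| := by
  classical
  set h : S → ℝ := fun u => ∑ v, q u v * β v * f u v with hh
  set z : S → ℝ := fun u => ∑ v, q u v * β v with hz
  have hC : 0 < C := lt_of_lt_of_le (hf (Classical.arbitrary S) (Classical.arbitrary S))
    (hfC (Classical.arbitrary S) (Classical.arbitrary S))
  have hz_lb : ∀ u, ε ≤ z u := by
    intro u
    calc ε = ∑ v, ε * β v := by rw [← Finset.mul_sum, hβ1, mul_one]
      _ ≤ ∑ v, q u v * β v := Finset.sum_le_sum fun v _ =>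
          mul_le_mul_of_nonneg_right (hq u v) (hβ0 v)
  have hz_ub : ∀ u, z u ≤ 1 := by
    intro u
    calc z u ≤ ∑ v, 1 * β v := Finset.sum_le_sum fun v _ =>
          mul_le_mul_of_nonneg_right (hq1 u v) (hβ0 v)
      _ = 1 := by rw [← Finset.mul_sum, hβ1, mul_one]
  have hz_pos : ∀ u, 0 < z u := fun u => lt_of_lt_of_le hε (hz_lb u)
  have hh0 : ∀ u, 0 ≤ h u := fun u => Finset.sum_nonneg fun v _ => by
    have h1 := hβ0 v; have h2 := (hf u v).le
    have h3 : (0:ℝ) ≤ q u v := le_trans hε.le (hq u v)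
    positivity
  have hhC : ∀ u, h u ≤ C * z u := by
    intro u
    rw [hz, Finset.mul_sum]
    refine Finset.sum_le_sum fun v _ => ?_
    have hqv : (0:ℝ) ≤ q u v * β v := mul_nonneg (le_trans hε.le (hq u v)) (hβ0 v)
    calc q u v * β v * f u v ≤ q u v * β v * C := mul_le_mul_of_nonneg_left (hfC u v) hqv
      _ = C * (q u v * β v) := by ring
  have hnum : ∀ α : S → ℝ, (∑ u, ∑ v, α u * q u v * β v * f u v) = ∑ u, α u * h u := by
    intro α
    refine Finset.sum_congr rfl fun u _ => ?_
    rw [hh, Finset.mul_sum]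
    exact Finset.sum_congr rfl fun v _ => by ring
  have hden : ∀ α : S → ℝ, (∑ u, ∑ v, α u * q u v * β v) = ∑ u, α u * z u := by
    intro α
    refine Finset.sum_congr rfl fun u _ => ?_
    rw [hz, Finset.mul_sum]
    exact Finset.sum_congr rfl fun v _ => by ring
  rw [hnum α₁, hnum α₂, hden α₁, hden α₂]
  set H₁ : ℝ := ∑ u, α₁ u * h u with hH₁
  set H₂ : ℝ := ∑ u, α₂ u * h u with hH₂
  set Z₁ : ℝ := ∑ u, α₁ u * z u with hZ₁
  set Z₂ : ℝ := ∑ u, α₂ u * z u with hZ₂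
  have hZ₁ε : ε ≤ Z₁ := by
    calc ε = ∑ u, α₁ u * ε := by rw [← Finset.sum_mul, hα₁1, one_mul]
      _ ≤ Z₁ := Finset.sum_le_sum fun u _ => mul_le_mul_of_nonneg_left (hz_lb u) (hα₁0 u)
  have hZ₂ε : ε ≤ Z₂ := by
    calc ε = ∑ u, α₂ u * ε := by rw [← Finset.sum_mul, hα₂1, one_mul]
      _ ≤ Z₂ := Finset.sum_le_sum fun u _ => mul_le_mul_of_nonneg_left (hz_lb u) (hα₂0 u)
  have hZ₁0 : 0 < Z₁ := lt_of_lt_of_le hε hZ₁ε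
  have hZ₂0 : 0 < Z₂ := lt_of_lt_of_le hε hZ₂ε
  have hH₂0 : 0 ≤ H₂ := Finset.sum_nonneg fun u _ => mul_nonneg (hα₂0 u) (hh0 u)
  have hH₂C : H₂ ≤ C * Z₂ := by
    rw [hZ₂, Finset.mul_sum]
    refine Finset.sum_le_sum fun u _ => ?_
    calc α₂ u * h u ≤ α₂ u * (C * z u) := mul_le_mul_of_nonneg_left (hhC u) (hα₂0 u)
      _ = C * (α₂ u * z u) := by ring
  set J₂ : ℝ := H₂ / Z₂ with hJ₂
  have hJ₂0 : 0 ≤ J₂ := div_nonneg hH₂0 hZ₂0.le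
  have hJ₂C : J₂ ≤ C := by
    rw [hJ₂, div_le_iff₀ hZ₂0]
    linarith [hH₂C]
  have hΔ0 : ∑ u, (α₁ u - α₂ u) = 0 := by
    rw [Finset.sum_sub_distrib, hα₁1, hα₂1, sub_self]
  have hkey : H₁ / Z₁ - H₂ / Z₂
      = (∑ u, (α₁ u - α₂ u) * (h u - J₂ * z u - (C / 2 - J₂))) / Z₁ := by
    have hs : ∑ u, (α₁ u - α₂ u) * (h u - J₂ * z u - (C / 2 - J₂))
        = H₁ - H₂ - J₂ * Z₁ + J₂ * Z₂ := by
      have hterm : ∀ u, (α₁ u - α₂ u) * (h u - J₂ * z u - (C / 2 - J₂))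
          = (α₁ u * h u - α₂ u * h u) - (J₂ * (α₁ u * z u) - J₂ * (α₂ u * z u))
            - (C / 2 - J₂) * (α₁ u - α₂ u) := fun u => by ring
      rw [Finset.sum_congr rfl fun u _ => hterm u]
      simp only [Finset.sum_sub_distrib, ← Finset.mul_sum]
      rw [hα₁1, hα₂1, hH₁, hH₂, hZ₁, hZ₂]
      ring
    have hJZ : J₂ * Z₂ = H₂ := by rw [hJ₂, div_mul_cancel₀ _ hZ₂0.ne']
    rw [hs, hJZ, hJ₂]
    field_simp
    ring
  rw [hkey, abs_div, abs_of_pos hZ₁0]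
  have hbound : |∑ u, (α₁ u - α₂ u) * (h u - J₂ * z u - (C / 2 - J₂))|
      ≤ (∑ u, |α₁ u - α₂ u|) * (C / 2) := by
    refine (Finset.abs_sum_le_sum_abs _ _).trans ?_
    rw [Finset.sum_mul]
    refine Finset.sum_le_sum fun u _ => ?_
    rw [abs_mul]
    refine mul_le_mul_of_nonneg_left ?_ (abs_nonneg _)
    rw [abs_le]
    constructor
    · have h1 : 0 ≤ J₂ * (1 - z u) := mul_nonneg hJ₂0 (by linarith [hz_ub u])
      nlinarith [hh0 u]
    · have h1 : 0 ≤ (C - J₂) * (1 - z u) := mul_nonneg (by linarith) (by linarith [hz_ub u])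
      nlinarith [hhC u]
  calc |∑ u, (α₁ u - α₂ u) * (h u - J₂ * z u - (C / 2 - J₂))| / Z₁
      ≤ ((∑ u, |α₁ u - α₂ u|) * (C / 2)) / Z₁ := (div_le_div_iff_of_pos_right hZ₁0).mpr hbound
    _ ≤ ((∑ u, |α₁ u - α₂ u|) * (C / 2)) / ε := by
        refine div_le_div_of_nonneg_left ?_ hε hZ₁ε
        positivity
    _ = C / (2 * ε) * ∑ u, |α₁ u - α₂ u| := by
        field_simp

lemma Jstab_right (q : S → S → ℝ) (ε C : ℝ) (hε : 0 < ε)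
    (hq : ∀ u v, ε ≤ q u v) (f : S → S → ℝ)
    (hf : ∀ u v, 0 < f u v) (hfC : ∀ u v, f u v ≤ C)
    (α : S → ℝ) (hα0 : ∀ u, 0 ≤ α u) (hα1 : ∑ u, α u = 1)
    (β₁ β₂ : S → ℝ) (hβ₁0 : ∀ v, 0 ≤ β₁ v) (hβ₁1 : ∑ v, β₁ v = 1)
    (hβ₂0 : ∀ v, 0 ≤ β₂ v) (hβ₂1 : ∑ v, β₂ v = 1)
    (hq1 : ∀ u v, q u v ≤ 1) :
    |(∑ u, ∑ v, α u * q u v * β₁ v * f u v) / (∑ u, ∑ v, α u * q u v * β₁ v)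
      - (∑ u, ∑ v, α u * q u v * β₂ v * f u v) / (∑ u, ∑ v, α u * q u v * β₂ v)|
      ≤ C / (2 * ε) * ∑ v, |β₁ v - β₂ v| := by
  have hswapn : ∀ β : S → ℝ, (∑ u, ∑ v, α u * q u v * β v * f u v)
      = ∑ v, ∑ u, β v * transp q v u * α u * (fun x y => f y x) v u := by
    intro β
    rw [Finset.sum_comm]
    exact Finset.sum_congr rfl fun v _ => Finset.sum_congr rfl fun u _ => by
      simp only [transp]; ring
  have hswapd : ∀ β : S → ℝ, (∑ u, ∑ v, α u * q u v * β v)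
      = ∑ v, ∑ u, β v * transp q v u * α u := by
    intro β
    rw [Finset.sum_comm]
    exact Finset.sum_congr rfl fun v _ => Finset.sum_congr rfl fun u _ => by
      simp only [transp]; ring
  rw [hswapn β₁, hswapn β₂, hswapd β₁, hswapd β₂]
  exact Jstab (transp q) ε C hε (fun u v => hq v u) (fun x y => f y x)
    (fun x y => hf y x) (fun x y => hfC y x) α hα0 hα1 β₁ β₂ hβ₁0 hβ₁1 hβ₂0 hβ₂1
    (fun u v => hq1 v u)
end Jstab

end Stmt14

open Stmt14 in
/-- Two-sided forgetting bound for conditional expectations given both endpoints. -/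
theorem stmt14 {S Y : Type*} [Fintype S] [DecidableEq S] [Nonempty S]
    (q : S → S → ℝ) (g : S → Y → ℝ) (y : ℕ → Y) (ε : ℝ) (hε : 0 < ε)
    (hq : ∀ x x', ε ≤ q x x') (hqs : ∀ x, ∑ x', q x x' = 1)
    (hg : ∀ x yy, 0 < g x yy)
    (f : S → S → ℝ) (C : ℝ) (hf : ∀ a b, 0 < f a b) (hfC : ∀ a b, f a b ≤ C)
    (μ₁ μ₂ : S × S → ℝ)
    (hμ₁ : ∀ p, 0 ≤ μ₁ p) (hμ₁s : ∑ p, μ₁ p = 1)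
    (hμ₂ : ∀ p, 0 ≤ μ₂ p) (hμ₂s : ∑ p, μ₂ p = 1)
    (n t : ℕ) (h1 : 1 ≤ t) (h2 : t ≤ n) :
    |(∑ p : S × S, hmmCondExp q g y f n t h1 h2 p.1 p.2 * μ₁ p) -
        ∑ p : S × S, hmmCondExp q g y f n t h1 h2 p.1 p.2 * μ₂ p|
      ≤ (C / ε) * ((1 - ε) ^ (t - 1) + (1 - ε) ^ (n - t)) := by
  classical
  obtain ⟨m, rfl⟩ : ∃ m, t = m + 1 := ⟨t - 1, by omega⟩
  obtain ⟨k, rfl⟩ : ∃ k, n = m + 1 + k := ⟨n - (m + 1), by omega⟩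
  have hq0 : ∀ u v : S, (0:ℝ) ≤ q u v := fun u v => le_trans hε.le (hq u v)
  have hq1 : ∀ u v : S, q u v ≤ 1 := by
    intro u v
    calc q u v ≤ ∑ w, q u w := Finset.single_le_sum (fun w _ => hq0 u w) (mem_univ v)
      _ = 1 := hqs u
  have hε1 : ε ≤ 1 :=
    le_trans (hq (Classical.arbitrary S) (Classical.arbitrary S)) (hq1 _ _)
  have hC : 0 < C := lt_of_lt_of_le (hf (Classical.arbitrary S) (Classical.arbitrary S))
    (hfC _ _)
  have hρ0 : (0:ℝ) ≤ 1 - ε := by linarith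
  have em : m + 1 - 1 = m := by omega
  have ek : m + 1 + k - (m + 1) = k := by omega
  rw [em, ek]
  obtain ⟨c, hcdef⟩ : ∃ c : ℕ → S → ℝ, ∀ r v, c r v = g v (y r) :=
    ⟨fun r v => g v (y r), fun r v => rfl⟩
  have hcpos : ∀ r v, 0 < c r v := fun r v => (hcdef r v) ▸ hg v (y r)
  set LA : List (S → S → ℝ) := (List.range m).map (fun i => mkE q (c (i + 1))) with hLA
  set csB : List (S → ℝ) := (List.range k).map (fun i => c (m + 1 + i + 1)) with hcsB
  set LB : List (S → S → ℝ) := csB.map (mkE q) with hLB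
  have hQCA : ∀ e ∈ LA, IsQC q e := by
    intro e he
    rw [hLA] at he
    obtain ⟨i, -, rfl⟩ := List.mem_map.mp he
    exact ⟨c (i + 1), fun v => hcpos _ v, fun u v => rfl⟩
  have hcsBpos : ∀ cc ∈ csB, ∀ v, 0 < cc v := by
    intro cc hcc v
    rw [hcsB] at hcc
    obtain ⟨i, -, rfl⟩ := List.mem_map.mp hcc
    exact hcpos _ v
  have hQCB : ∀ e ∈ LB, IsQC q e := by
    intro e he
    rw [hLB] at he
    obtain ⟨cc, hcc, rfl⟩ := List.mem_map.mp he
    exact ⟨cc, hcsBpos cc hcc, fun u v => rfl⟩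
  have hLAlen : LA.length = m := by simp [hLA]
  have hTApos : ∀ a, 0 < pTot LA a := pTot_pos hε hq hQCA
  have hAnn : ∀ a u, 0 ≤ pathSum LA a u :=
    fun a u => pathSum_nonneg (fun e he u' w => (qc_pos hε hq hQCA e he u' w).le) a u
  have hBnn : ∀ v b, 0 ≤ pathSum LB v b :=
    fun v b => pathSum_nonneg (fun e he u' w => (qc_pos hε hq hQCB e he u' w).le) v b
  obtain ⟨TB, hTB⟩ : ∃ TB : S → ℝ, ∀ b, TB b = ∑ v, c (m + 1) v * pathSum LB v b :=
    ⟨_, fun b => rfl⟩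
  have hTBpos : ∀ b, 0 < TB b := by
    intro b
    rw [hTB b]
    have hdiag : 0 < c (m + 1) b * pathSum LB b b :=
      mul_pos (hcpos _ b) (pathSum_diag_pos (qc_pos hε hq hQCB) b)
    refine lt_of_lt_of_le hdiag
      (Finset.single_le_sum (f := fun v => c (m + 1) v * pathSum LB v b) ?_ (mem_univ b))
    exact fun v _ => mul_nonneg (hcpos _ v).le (hBnn v b)
  obtain ⟨alph, halph⟩ : ∃ alph : S → S → ℝ, ∀ a u, alph a u = pathSum LA a u / pTot LA a :=
    ⟨_, fun a u => rfl⟩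
  obtain ⟨bet, hbet⟩ : ∃ bet : S → S → ℝ,
      ∀ b v, bet b v = c (m + 1) v * pathSum LB v b / TB b := ⟨_, fun b v => rfl⟩
  have halph0 : ∀ a u, 0 ≤ alph a u := fun a u =>
    (halph a u) ▸ div_nonneg (hAnn a u) (hTApos a).le
  have halph1 : ∀ a, ∑ u, alph a u = 1 := by
    intro a
    simp only [halph]
    rw [← Finset.sum_div]
    exact div_self (hTApos a).ne'
  have hbet0 : ∀ b v, 0 ≤ bet b v := fun b v =>
    (hbet b v) ▸ div_nonneg (mul_nonneg (hcpos _ v).le (hBnn v b)) (hTBpos b).le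
  have hbet1 : ∀ b, ∑ v, bet b v = 1 := by
    intro b
    simp only [hbet, hTB]
    rw [← Finset.sum_div]
    exact div_self (by rw [← hTB b]; exact (hTBpos b).ne')
  -- master combinatorial identity
  have hmain : ∀ (F : S → S → ℝ) (a b : S),
      (∑ p : Fin (m + 1 + k + 1) → S,
        if p 0 = a ∧ p (Fin.last (m + 1 + k)) = b then
          hmmPathWeight q g y (m + 1 + k) p * F (p ⟨m + 1 - 1, by omega⟩) (p ⟨m + 1, by omega⟩)
        else 0)
      = ∑ v, (∑ u, pathSum LA a u * (q u v * c (m + 1) v * F u v)) * pathSum LB v b := by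
    intro F a b
    obtain ⟨E', hE'⟩ : ∃ E' : ℕ → S → S → ℝ,
        ∀ r u v, E' r u v = (q u v * g v (y r)) * (if r = m + 1 then F u v else 1) :=
      ⟨_, fun r u v => rfl⟩
    have hmlt : m < m + 1 + k := by omega
    have hstep1 : ∀ p : Fin (m + 1 + k + 1) → S,
        hmmPathWeight q g y (m + 1 + k) p * F (p ⟨m + 1 - 1, by omega⟩) (p ⟨m + 1, by omega⟩)
        = ∏ u : Fin (m + 1 + k), E' ((u : ℕ) + 1) (p u.castSucc) (p u.succ) := by
      intro p
      have hsplit2 : ∏ u : Fin (m + 1 + k), E' ((u : ℕ) + 1) (p u.castSucc) (p u.succ)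
          = (∏ u : Fin (m + 1 + k), (q (p u.castSucc) (p u.succ) * g (p u.succ) (y ((u : ℕ) + 1))))
            * ∏ u : Fin (m + 1 + k),
                (if (u : ℕ) + 1 = m + 1 then F (p u.castSucc) (p u.succ) else 1) := by
        rw [← Finset.prod_mul_distrib]
        exact Finset.prod_congr rfl fun u _ => hE' _ _ _
      have hite : ∏ u : Fin (m + 1 + k),
          (if (u : ℕ) + 1 = m + 1 then F (p u.castSucc) (p u.succ) else 1)
          = F (p ⟨m + 1 - 1, by omega⟩) (p ⟨m + 1, by omega⟩) := by
        have hcond : ∀ u : Fin (m + 1 + k),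
            ((u : ℕ) + 1 = m + 1) ↔ (u = (⟨m, hmlt⟩ : Fin (m + 1 + k))) := by
          intro u
          constructor
          · intro h; exact Fin.ext (show (u : ℕ) = m by omega)
          · intro h; subst h; rfl
        rw [Finset.prod_congr rfl (fun u _ => if_congr (hcond u) rfl rfl)]
        rw [Finset.prod_ite_eq' univ (⟨m, hmlt⟩ : Fin (m + 1 + k))
          (fun u => F (p u.castSucc) (p u.succ))]
        simp only [mem_univ, if_true]
        rfl
      rw [hsplit2, hite]
      rfl
    rw [Finset.sum_congr rfl fun p _ => by rw [hstep1 p]]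
    rw [conv (m + 1 + k) E' a b]
    rw [range_split (fun i => E' (i + 1)) m k]
    have hLAeq : (List.range m).map (fun i => E' (i + 1)) = LA := by
      rw [hLA]
      refine List.map_congr_left fun i hi => ?_
      have hi' : i < m := List.mem_range.mp hi
      funext u v
      rw [hE' (i + 1) u v, if_neg (by omega), mul_one]
      simp [mkE, hcdef]
    have hLBeq : (List.range k).map (fun i => E' (m + 1 + i + 1)) = LB := by
      rw [hLB, hcsB, List.map_map]
      refine List.map_congr_left fun i hi => ?_
      funext u v
      simp only [Function.comp]
      rw [hE' (m + 1 + i + 1) u v, if_neg (by omega), mul_one]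
      simp [mkE, hcdef]
    rw [hLAeq, hLBeq]
    rw [pathSum_split (LA ++ [E' (m + 1)]) LB a b]
    refine Finset.sum_congr rfl fun v _ => ?_
    rw [pathSum_append_single]
    congr 1
    refine Finset.sum_congr rfl fun u _ => ?_
    congr 1
    rw [hE' (m + 1) u v, if_pos rfl]
    rw [hcdef (m + 1) v]
  -- expressing the conditional expectation through normalized quantities
  have hCE : ∀ a b : S, hmmCondExp q g y f (m + 1 + k) (m + 1) h1 h2 a b
      = (∑ u, ∑ v, alph a u * q u v * bet b v * f u v)
        / (∑ u, ∑ v, alph a u * q u v * bet b v) := by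
    intro a b
    have hTT : (0:ℝ) < pTot LA a * TB b := mul_pos (hTApos a) (hTBpos b)
    have hfacN : (∑ v, (∑ u, pathSum LA a u * (q u v * c (m + 1) v * f u v)) * pathSum LB v b)
        = (pTot LA a * TB b) * ∑ u, ∑ v, alph a u * q u v * bet b v * f u v := by
      simp only [Finset.sum_mul, Finset.mul_sum]
      rw [Finset.sum_comm]
      refine Finset.sum_congr rfl fun u _ => Finset.sum_congr rfl fun v _ => ?_
      rw [halph a u, hbet b v]
      have hx : pTot LA a ≠ 0 := (hTApos a).ne'
      have hy : TB b ≠ 0 := (hTBpos b).ne'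
      field_simp
    have hfacD : (∑ v, (∑ u, pathSum LA a u * (q u v * c (m + 1) v * 1)) * pathSum LB v b)
        = (pTot LA a * TB b) * ∑ u, ∑ v, alph a u * q u v * bet b v := by
      simp only [Finset.sum_mul, Finset.mul_sum]
      rw [Finset.sum_comm]
      refine Finset.sum_congr rfl fun u _ => Finset.sum_congr rfl fun v _ => ?_
      rw [halph a u, hbet b v]
      have hx : pTot LA a ≠ 0 := (hTApos a).ne'
      have hy : TB b ≠ 0 := (hTBpos b).ne'
      field_simp
    have hDen : (∑ p : Fin (m + 1 + k + 1) → S,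
        if p 0 = a ∧ p (Fin.last (m + 1 + k)) = b then hmmPathWeight q g y (m + 1 + k) p else 0)
        = (pTot LA a * TB b) * ∑ u, ∑ v, alph a u * q u v * bet b v := by
      rw [← hfacD]
      have h := hmain (fun _ _ => 1) a b
      simp only [mul_one] at h ⊢
      rw [← h]
    have hNum : (∑ p : Fin (m + 1 + k + 1) → S,
        if p 0 = a ∧ p (Fin.last (m + 1 + k)) = b then
          hmmPathWeight q g y (m + 1 + k) p
            * f (p ⟨m + 1 - 1, by omega⟩) (p ⟨m + 1, by omega⟩) else 0)
        = (pTot LA a * TB b) * ∑ u, ∑ v, alph a u * q u v * bet b v * f u v := by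
      rw [hmain f a b, hfacN]
    unfold hmmCondExp
    rw [hNum, hDen, mul_div_mul_left _ _ hTT.ne']
  -- L¹ forgetting of normalized rows
  have hforgetA : ∀ a a' : S, ∑ u, |alph a u - alph a' u| ≤ 2 * (1 - ε) ^ m := by
    intro a a'
    rw [← hLAlen]
    simp only [halph]
    exact forget_rows hε hq hq1 hQCA a a'
  have hforgetB : ∀ b b' : S, ∑ v, |bet b v - bet b' v| ≤ 2 * (1 - ε) ^ k := by
    intro b b'
    rcases Nat.eq_zero_or_pos k with hk0 | hkpos
    · subst hk0
      have hLBnil : LB = [] := by rw [hLB, hcsB]; simp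
      have hbet' : ∀ x v : S, bet x v = if x = v then 1 else 0 := by
        intro x v
        rw [hbet x v]
        simp only [hLBnil, pathSum_nil]
        have hTBx : TB x = c (m + 1) x := by
          rw [hTB x]
          simp only [hLBnil, pathSum_nil, mul_ite, mul_one, mul_zero]
          rw [Finset.sum_ite_eq univ x (fun v => c (m + 1) v)]
          simp
        rw [hTBx]
        by_cases hxv : x = v
        · subst hxv
          simp [div_self (hcpos (m + 1) x).ne']
        · simp [hxv, Ne.symm hxv]
      simp only [hbet']
      calc ∑ v, |(if b = v then (1:ℝ) else 0) - if b' = v then 1 else 0|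
          ≤ ∑ v, (|if b = v then (1:ℝ) else 0| + |if b' = v then 1 else 0|) := by
            refine Finset.sum_le_sum fun v _ => ?_
            exact (abs_sub _ _)
        _ = 2 := by
            rw [Finset.sum_add_distrib]
            have hi : ∀ x : S, ∑ v, |if x = v then (1:ℝ) else 0| = 1 := by
              intro x
              have : ∀ v, |if x = v then (1:ℝ) else 0| = if x = v then 1 else 0 := by
                intro v; by_cases hxv : x = v <;> simp [hxv]
              simp only [this]
              rw [Finset.sum_ite_eq univ x (fun _ => (1:ℝ))]
              simp
            rw [hi b, hi b']
            norm_num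
        _ ≤ 2 * (1 - ε) ^ 0 := by norm_num
    · obtain ⟨j, rfl⟩ : ∃ j, k = j + 1 := ⟨k - 1, by omega⟩
      have hcsBlen : csB.length = j + 1 := by rw [hcsB]; simp
      rcases List.eq_nil_or_concat csB with hnil | ⟨M, cl, hMcl⟩
      · rw [hnil] at hcsBlen; simp at hcsBlen
      rw [List.concat_eq_append] at hMcl
      have hclpos : ∀ v, 0 < cl v := hcsBpos cl (by rw [hMcl]; simp)
      have hMpos : ∀ cc ∈ M, ∀ v, 0 < cc v := fun cc h => hcsBpos cc (by rw [hMcl]; simp [h])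
      set LB' : List (S → S → ℝ) := (M.reverse ++ [c (m + 1)]).map (mkE (transp q)) with hLB'
      have hQCB' : ∀ e ∈ LB', IsQC (transp q) e := by
        intro e he
        rw [hLB'] at he
        obtain ⟨cc, hcc, rfl⟩ := List.mem_map.mp he
        rcases List.mem_append.mp hcc with h | h
        · exact ⟨cc, hMpos cc (List.mem_reverse.mp h), fun u v => rfl⟩
        · have : cc = c (m + 1) := by simpa using h
          subst this
          exact ⟨c (m + 1), fun v => hcpos _ v, fun u v => rfl⟩
      have hrev : ∀ v b : S, c (m + 1) v * pathSum LB v b = cl b * pathSum LB' b v := by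
        intro v b
        rw [hLB, hMcl, hLB']
        exact pathSum_rev q M cl (c (m + 1)) v b
      have hTBalt : ∀ b, TB b = cl b * pTot LB' b := by
        intro b
        rw [hTB b]
        rw [Finset.sum_congr rfl fun v _ => hrev v b, ← Finset.mul_sum]
        rfl
      have hbetalt : ∀ b v, bet b v = pathSum LB' b v / pTot LB' b := by
        intro b v
        rw [hbet b v, hrev v b, hTBalt b, mul_div_mul_left _ _ (hclpos b).ne']
      have hlen' : LB'.length = j + 1 := by
        rw [hLB']
        have : M.length + 1 = j + 1 := by
          have := hcsBlen
          rw [hMcl] at this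
          simpa using this
        simp [this]
      simp only [hbetalt]
      rw [← hlen']
      exact forget_rows hε (fun u v => hq v u) (fun u v => hq1 v u) hQCB' b b'
  -- pairwise oscillation bound
  have hpair : ∀ a b a' b' : S,
      |hmmCondExp q g y f (m + 1 + k) (m + 1) h1 h2 a b
        - hmmCondExp q g y f (m + 1 + k) (m + 1) h1 h2 a' b'|
      ≤ (C / ε) * ((1 - ε) ^ m + (1 - ε) ^ k) := by
    intro a b a' b'
    have t1 : |hmmCondExp q g y f (m + 1 + k) (m + 1) h1 h2 a b
        - hmmCondExp q g y f (m + 1 + k) (m + 1) h1 h2 a' b|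
        ≤ C / (2 * ε) * (2 * (1 - ε) ^ m) := by
      rw [hCE a b, hCE a' b]
      refine (Jstab q ε C hε hq f hf hfC (bet b) (hbet0 b) (hbet1 b)
        (alph a) (alph a') (halph0 a) (halph1 a) (halph0 a') (halph1 a') hq1).trans ?_
      exact mul_le_mul_of_nonneg_left (hforgetA a a') (by positivity)
    have t2 : |hmmCondExp q g y f (m + 1 + k) (m + 1) h1 h2 a' b
        - hmmCondExp q g y f (m + 1 + k) (m + 1) h1 h2 a' b'|
        ≤ C / (2 * ε) * (2 * (1 - ε) ^ k) := by
      rw [hCE a' b, hCE a' b']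
      refine (Jstab_right q ε C hε hq f hf hfC (alph a') (halph0 a') (halph1 a')
        (bet b) (bet b') (hbet0 b) (hbet1 b) (hbet0 b') (hbet1 b') hq1).trans ?_
      exact mul_le_mul_of_nonneg_left (hforgetB b b') (by positivity)
    calc |hmmCondExp q g y f (m + 1 + k) (m + 1) h1 h2 a b
        - hmmCondExp q g y f (m + 1 + k) (m + 1) h1 h2 a' b'|
        ≤ |hmmCondExp q g y f (m + 1 + k) (m + 1) h1 h2 a b
            - hmmCondExp q g y f (m + 1 + k) (m + 1) h1 h2 a' b|
          + |hmmCondExp q g y f (m + 1 + k) (m + 1) h1 h2 a' b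
            - hmmCondExp q g y f (m + 1 + k) (m + 1) h1 h2 a' b'| := abs_sub_le _ _ _
      _ ≤ C / (2 * ε) * (2 * (1 - ε) ^ m) + C / (2 * ε) * (2 * (1 - ε) ^ k) :=
          add_le_add t1 t2
      _ = (C / ε) * ((1 - ε) ^ m + (1 - ε) ^ k) := by
          field_simp
  -- final oscillation argument
  set D : ℝ := (C / ε) * ((1 - ε) ^ m + (1 - ε) ^ k) with hD
  have hD0 : 0 ≤ D := by
    have p1 := pow_nonneg hρ0 m
    have p2 := pow_nonneg hρ0 k
    rw [hD]
    positivity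
  obtain ⟨CE, hCEd⟩ : ∃ CE : S × S → ℝ,
      ∀ p : S × S, CE p = hmmCondExp q g y f (m + 1 + k) (m + 1) h1 h2 p.1 p.2 :=
    ⟨_, fun p => rfl⟩
  have hfold1 : (∑ p : S × S, hmmCondExp q g y f (m + 1 + k) (m + 1) h1 h2 p.1 p.2 * μ₁ p)
      = ∑ p, CE p * μ₁ p := Finset.sum_congr rfl fun p _ => by rw [hCEd p]
  have hfold2 : (∑ p : S × S, hmmCondExp q g y f (m + 1 + k) (m + 1) h1 h2 p.1 p.2 * μ₂ p)
      = ∑ p, CE p * μ₂ p := Finset.sum_congr rfl fun p _ => by rw [hCEd p]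
  rw [hfold1, hfold2]
  have hpair' : ∀ p p' : S × S, |CE p - CE p'| ≤ D := fun p p' => by
    rw [hCEd p, hCEd p']
    exact hpair p.1 p.2 p'.1 p'.2
  obtain ⟨pM, -, hpM⟩ := Finset.exists_max_image (univ : Finset (S × S)) CE univ_nonempty
  obtain ⟨pm, -, hpm⟩ := Finset.exists_min_image (univ : Finset (S × S)) CE univ_nonempty
  obtain ⟨Pl, hPl⟩ : ∃ Pl : S × S → ℝ, ∀ p, Pl p = max (μ₁ p - μ₂ p) 0 := ⟨_, fun p => rfl⟩
  obtain ⟨Mi, hMi⟩ : ∃ Mi : S × S → ℝ, ∀ p, Mi p = max (μ₂ p - μ₁ p) 0 := ⟨_, fun p => rfl⟩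
  have hPlMi : ∀ p, μ₁ p - μ₂ p = Pl p - Mi p := by
    intro p
    rw [hPl p, hMi p]
    rcases le_total (μ₁ p) (μ₂ p) with h | h
    · rw [max_eq_right (by linarith), max_eq_left (by linarith)]
      ring
    · rw [max_eq_left (by linarith), max_eq_right (by linarith)]
      ring
  have hPl0 : ∀ p, 0 ≤ Pl p := fun p => (hPl p) ▸ le_max_right _ _
  have hMi0 : ∀ p, 0 ≤ Mi p := fun p => (hMi p) ▸ le_max_right _ _
  have hsums : ∑ p, Pl p = ∑ p, Mi p := by
    have h0 : ∑ p, (μ₁ p - μ₂ p) = 0 := by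
      rw [Finset.sum_sub_distrib, hμ₁s, hμ₂s, sub_self]
    rw [Finset.sum_congr rfl fun p _ => hPlMi p, Finset.sum_sub_distrib] at h0
    linarith
  have hsP1 : ∑ p, Pl p ≤ 1 := by
    calc ∑ p, Pl p ≤ ∑ p, μ₁ p := Finset.sum_le_sum fun p _ => by
          rw [hPl p]
          exact max_le (by linarith [hμ₂ p]) (hμ₁ p)
      _ = 1 := hμ₁s
  have hsP0 : 0 ≤ ∑ p, Pl p := Finset.sum_nonneg fun p _ => hPl0 p
  have hgoal : (∑ p : S × S, CE p * μ₁ p) - ∑ p : S × S, CE p * μ₂ p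
      = (∑ p, CE p * Pl p) - ∑ p, CE p * Mi p := by
    rw [← Finset.sum_sub_distrib, ← Finset.sum_sub_distrib]
    refine Finset.sum_congr rfl fun p _ => ?_
    rw [← mul_sub, ← mul_sub, hPlMi p]
  rw [hgoal]
  have hup1 : ∑ p, CE p * Pl p ≤ CE pM * ∑ p, Pl p := by
    rw [Finset.mul_sum]
    exact Finset.sum_le_sum fun p _ =>
      mul_le_mul_of_nonneg_right (hpM p (mem_univ p)) (hPl0 p)
  have hup2 : CE pm * ∑ p, Pl p ≤ ∑ p, CE p * Mi p := by
    rw [hsums, Finset.mul_sum]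
    exact Finset.sum_le_sum fun p _ =>
      mul_le_mul_of_nonneg_right (hpm p (mem_univ p)) (hMi0 p)
  have hlo1 : CE pm * ∑ p, Pl p ≤ ∑ p, CE p * Pl p := by
    rw [Finset.mul_sum]
    exact Finset.sum_le_sum fun p _ =>
      mul_le_mul_of_nonneg_right (hpm p (mem_univ p)) (hPl0 p)
  have hlo2 : ∑ p, CE p * Mi p ≤ CE pM * ∑ p, Pl p := by
    rw [hsums, Finset.mul_sum]
    exact Finset.sum_le_sum fun p _ =>
      mul_le_mul_of_nonneg_right (hpM p (mem_univ p)) (hMi0 p)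
  have hMd : CE pM - CE pm ≤ D := le_trans (le_abs_self _) (hpair' pM pm)
  rw [abs_le]
  constructor
  · have : (CE pm - CE pM) * ∑ p, Pl p ≤ (∑ p, CE p * Pl p) - ∑ p, CE p * Mi p := by
      rw [sub_mul]
      linarith [hlo1, hlo2]
    have h2 : -D ≤ (CE pm - CE pM) * ∑ p, Pl p := by
      have h3 : -(CE pM - CE pm) * ∑ p, Pl p ≥ -(D * 1) := by
        have h4 : (CE pM - CE pm) * ∑ p, Pl p ≤ D * 1 := by
          rcases le_or_gt 0 (CE pM - CE pm) with hcc | hcc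
          · calc (CE pM - CE pm) * ∑ p, Pl p ≤ D * ∑ p, Pl p :=
                mul_le_mul_of_nonneg_right hMd hsP0
              _ ≤ D * 1 := mul_le_mul_of_nonneg_left hsP1 hD0
          · calc (CE pM - CE pm) * ∑ p, Pl p ≤ 0 :=
                mul_nonpos_of_nonpos_of_nonneg hcc.le hsP0
              _ ≤ D * 1 := by rw [mul_one]; exact hD0
        linarith
      calc -D = -(D * 1) := by ring
        _ ≤ -(CE pM - CE pm) * ∑ p, Pl p := by linarith [h3]
        _ = (CE pm - CE pM) * ∑ p, Pl p := by ring
    linarith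
  · have : (∑ p, CE p * Pl p) - ∑ p, CE p * Mi p ≤ (CE pM - CE pm) * ∑ p, Pl p := by
      rw [sub_mul]
      linarith [hup1, hup2]
    have h4 : (CE pM - CE pm) * ∑ p, Pl p ≤ D := by
      rcases le_or_gt 0 (CE pM - CE pm) with hcc | hcc
      · calc (CE pM - CE pm) * ∑ p, Pl p ≤ D * ∑ p, Pl p :=
            mul_le_mul_of_nonneg_right hMd hsP0
          _ ≤ D * 1 := mul_le_mul_of_nonneg_left hsP1 hD0
          _ = D := mul_one D
      · calc (CE pM - CE pm) * ∑ p, Pl p ≤ 0 :=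
            mul_nonpos_of_nonpos_of_nonneg hcc.le hsP0
          _ ≤ D := hD0
    linarith
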